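/- Define the 5×5 matrix Â with rows (-4, 2, 0, 0, 0), (-4, 2, 0, 2, -1/2), (0, 0, 1/2, 0, -1), (0, 1, 1, 0, 0), (0, 0, 0, 0, 0) and the vector b̂ = (-1, 1/2, 1, -2, 1) ∈ ℝ^5. Define the sequence h[t] ∈ ℝ^5 by h[-1] = 0 and h[t] = ρ(Â h[t-1] + b̂) for t ∈ ℕ₀, where ρ(y) = max(0,y) componentwise. Then for all t ∈ ℕ₀, the first component (h[t])_1 equals 1 if t + 2 = 2^k for some integer k >= 2, and equals 0 otherwise; moreover ‖h[t]‖_∞ <= 2 for all t ∈ ℕ₀. -/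

import Mathlib

/-- ReLU applied componentwise. -/
noncomputable def relu {n : Type*} (v : n → ℝ) : n → ℝ := fun i => max 0 (v i)

/-- The matrix `Â` of the clocking mechanism. -/
noncomputable def Ahat : Matrix (Fin 5) (Fin 5) ℝ :=
  !![-4, 2, 0, 0, 0;
     -4, 2, 0, 2, -1/2;
     0, 0, 1/2, 0, -1;
     0, 1, 1, 0, 0;
     0, 0, 0, 0, 0]

/-- The vector `b̂` of the clocking mechanism. -/
noncomputable def bhat : Fin 5 → ℝ := ![-1, 1/2, 1, -2, 1]

/-- The sequence `h[t] ∈ ℝ⁵`: `h[−1] = 0`, `h[t] = ρ(Â h[t−1] + b̂)` for `t ∈ ℕ₀`. -/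
noncomputable def clockSeq : ℕ → Fin 5 → ℝ
  | 0 => relu (Ahat.mulVec 0 + bhat)
  | t + 1 => relu (Ahat.mulVec (clockSeq t) + bhat)

/-- Closed form for the state at time `t`, where `t + 2 = 2^k + j`, `0 ≤ j < 2^k`. -/
noncomputable def stv (k j t : ℕ) : Fin 5 → ℝ :=
  if 2 ≤ k ∧ j = 0 then ![1, 2, (2:ℝ)^(-(t:ℤ)), 0, 1]
  else if 2 ≤ k ∧ j = 1 then ![0, 0, (2:ℝ)^(-(t:ℤ)), 2*(2:ℝ)^(-(t:ℤ)), 1]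
  else ![0, (2:ℝ)^((j:ℤ)+1-2^k), (2:ℝ)^(-(t:ℤ)), 0, 1]

lemma zpow_le_one' {n : ℤ} (hn : n ≤ 0) : (2:ℝ) ^ n ≤ 1 :=
  zpow_le_one_of_nonpos₀ one_le_two hn

lemma step_eq (t : ℕ) (v : Fin 5 → ℝ) (h : clockSeq t = relu (Ahat.mulVec v + bhat)) :
    clockSeq t = ![max 0 (-4*v 0 + 2*v 1 - 1),
                   max 0 (-4*v 0 + 2*v 1 + 2*v 3 - (1/2)*v 4 + 1/2),
                   max 0 ((1/2)*v 2 - v 4 + 1),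
                   max 0 (v 1 + v 2 - 2),
                   max 0 (1:ℝ)] := by
  rw [h]; funext i
  fin_cases i <;>
    · simp only [relu, Ahat, bhat, Matrix.mulVec, dotProduct, Fin.sum_univ_five,
        Pi.add_apply]
      simp
      try ring_nf

/-- Key invariant. -/
lemma clockSeq_closed_form (t : ℕ) :
    ∃ k j : ℕ, 1 ≤ k ∧ j < 2 ^ k ∧ t + 2 = 2 ^ k + j ∧ clockSeq t = stv k j t := by
  induction t with
  | zero =>
    refine ⟨1, 0, le_refl 1, by norm_num, by norm_num, ?_⟩
    have h0 : clockSeq 0 = relu (Ahat.mulVec 0 + bhat) := rfl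
    rw [step_eq 0 0 (by simpa using h0)]
    have hs : stv 1 0 0 = ![0, (2:ℝ)^((0:ℤ)+1-2^1), (2:ℝ)^(-(0:ℤ)), 0, 1] := by
      rw [stv, if_neg (by norm_num), if_neg (by norm_num)]; norm_num
    rw [hs]
    funext i; fin_cases i <;> norm_num
  | succ t ih =>
    obtain ⟨k, j, hk, hj, ht, hcl⟩ := ih
    have hstep : clockSeq (t + 1) = relu (Ahat.mulVec (stv k j t) + bhat) := by
      rw [← hcl]; rfl
    have hse := step_eq (t + 1) (stv k j t) hstep
    have h2t : (2:ℝ) ^ (-(t:ℤ)) ≤ 1 := zpow_le_one' (by omega)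
    have h2tpos : (0:ℝ) < 2 ^ (-(t:ℤ)) := by positivity
    have h2succ : (2:ℝ) ^ (-(t:ℤ)) / 2 = 2 ^ (-((t+1:ℕ):ℤ)) := by
      rw [show (-((t+1:ℕ)):ℤ) = -(t:ℤ) + (-1) by push_cast; ring,
        zpow_add₀ (two_ne_zero : (2:ℝ) ≠ 0), zpow_neg_one]; ring
    by_cases hj0 : 2 ≤ k ∧ j = 0
    · -- state (1, 2, ε, 0, 1) → (0, 0, ε/2, ε, 1), next j = 1
      refine ⟨k, 1, hk, ?_, by omega, ?_⟩
      · have : 2 ≤ 2 ^ k := by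
          calc 2 = 2^1 := rfl
          _ ≤ 2^k := Nat.pow_le_pow_right (by norm_num) hk
        omega
      have hstv : stv k j t = ![1, 2, (2:ℝ)^(-(t:ℤ)), 0, 1] := by rw [stv, if_pos hj0]
      have hstv' : stv k 1 (t+1) =
          ![0, 0, (2:ℝ)^(-((t+1:ℕ):ℤ)), 2*(2:ℝ)^(-((t+1:ℕ):ℤ)), 1] := by
        rw [stv, if_neg (by simp), if_pos ⟨hj0.1, rfl⟩]
      rw [hse, hstv, hstv']
      funext i; fin_cases i
      · norm_num
      · show max 0 (-4*(1:ℝ) + 2*2 + 2*0 - (1/2)*1 + 1/2) = 0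
        norm_num
      · show max 0 ((1/2)*(2:ℝ)^(-(t:ℤ)) - 1 + 1) = (2:ℝ)^(-((t+1:ℕ):ℤ))
        rw [max_eq_right (by linarith), ← h2succ]; ring
      · show max 0 ((2:ℝ) + 2^(-(t:ℤ)) - 2) = 2*(2:ℝ)^(-((t+1:ℕ):ℤ))
        rw [max_eq_right (by linarith), ← h2succ]; ring
      · norm_num
    · by_cases hj1 : 2 ≤ k ∧ j = 1
      · -- state (0, 0, ε, 2ε, 1) → (0, 4ε, ε/2, 0, 1), next j = 2
        have h4 : 4 ≤ 2 ^ k := by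
          calc 4 = 2^2 := rfl
          _ ≤ 2^k := Nat.pow_le_pow_right (by norm_num) hj1.1
        refine ⟨k, 2, hk, by omega, by omega, ?_⟩
        have hstv : stv k j t = ![0, 0, (2:ℝ)^(-(t:ℤ)), 2*(2:ℝ)^(-(t:ℤ)), 1] := by
          rw [stv, if_neg (by simp [hj1.2]), if_pos hj1]
        have hstv' : stv k 2 (t+1) =
            ![0, (2:ℝ)^(((2:ℕ):ℤ)+1-2^k), (2:ℝ)^(-((t+1:ℕ):ℤ)), 0, 1] := by
          rw [stv, if_neg (by omega), if_neg (by omega)]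
        have hexp : ((2:ℕ):ℤ) + 1 - 2 ^ k = -(t:ℤ) + 2 := by
          have htn : t + 2 = 2 ^ k + 1 := by omega
          have htz : (t:ℤ) + 2 = 2 ^ k + 1 := by exact_mod_cast htn
          push_cast; omega
        rw [hse, hstv, hstv']
        funext i; fin_cases i
        · norm_num
        · show max 0 (-4*(0:ℝ) + 2*0 + 2*(2*2^(-(t:ℤ))) - (1/2)*1 + 1/2)
              = (2:ℝ)^(((2:ℕ):ℤ)+1-2^k)
          rw [hexp, zpow_add₀ (two_ne_zero : (2:ℝ) ≠ 0),
            max_eq_right (by linarith)]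
          norm_num; ring
        · show max 0 ((1/2)*(2:ℝ)^(-(t:ℤ)) - 1 + 1) = (2:ℝ)^(-((t+1:ℕ):ℤ))
          rw [max_eq_right (by linarith), ← h2succ]; ring
        · show max 0 ((0:ℝ) + 2^(-(t:ℤ)) - 2) = 0
          rw [max_eq_left (by linarith)]
        · norm_num
      · -- middle state (0, a, ε, 0, 1), a = 2^(j+1-2^k) ≤ 1
        have hstv : stv k j t = ![0, (2:ℝ)^((j:ℤ)+1-2^k), (2:ℝ)^(-(t:ℤ)), 0, 1] := by
          rw [stv, if_neg hj0, if_neg hj1]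
        set a : ℝ := (2:ℝ)^((j:ℤ)+1-2^k) with ha
        have hjk : (j:ℤ) + 1 ≤ 2 ^ k := by exact_mod_cast Nat.succ_le_of_lt hj
        have hale : a ≤ 1 := zpow_le_one' (by omega)
        have hapos : 0 < a := by positivity
        by_cases hlast : j = 2 ^ k - 1
        · -- a = 1; next is (k+1, 0) : state (1, 2, ε/2, 0, 1)
          have hj' : (j:ℤ) = 2^k - 1 := by
            have h1 : 1 ≤ 2^k := Nat.one_le_two_pow
            have : (j:ℤ) + 1 = 2^k := by
              exact_mod_cast congrArg (Nat.cast : ℕ → ℤ) (by omega : j + 1 = 2^k)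
            linarith
          have ha1 : a = 1 := by
            rw [ha, show (j:ℤ) + 1 - 2^k = 0 by rw [hj']; ring, zpow_zero]
          refine ⟨k + 1, 0, by omega, by positivity, ?_, ?_⟩
          · have : 2 ^ (k+1) = 2 * 2 ^ k := by ring
            omega
          have hstv' : stv (k+1) 0 (t+1) = ![1, 2, (2:ℝ)^(-((t+1:ℕ):ℤ)), 0, 1] := by
            rw [stv, if_pos ⟨by omega, rfl⟩]
          rw [hse, hstv, hstv']
          funext i; fin_cases i
          · show max 0 (-4*(0:ℝ) + 2*a - 1) = 1
            rw [ha1]; norm_num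
          · show max 0 (-4*(0:ℝ) + 2*a + 2*0 - (1/2)*1 + 1/2) = 2
            rw [ha1]; norm_num
          · show max 0 ((1/2)*(2:ℝ)^(-(t:ℤ)) - 1 + 1) = (2:ℝ)^(-((t+1:ℕ):ℤ))
            rw [max_eq_right (by linarith), ← h2succ]; ring
          · show max 0 (a + (2:ℝ)^(-(t:ℤ)) - 2) = 0
            rw [max_eq_left (by linarith)]
          · norm_num
        · -- next is (k, j+1), still middle
          have hjlt : j + 1 < 2 ^ k := by omega
          have hahalf : a ≤ 1/2 := by
            rw [ha, show (1:ℝ)/2 = (2:ℝ)^(-1:ℤ) by norm_num]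
            apply zpow_le_zpow_right₀ one_le_two
            have : (j:ℤ) + 2 ≤ 2 ^ k := by exact_mod_cast hjlt
            omega
          refine ⟨k, j + 1, hk, hjlt, by omega, ?_⟩
          have hnot' : ¬ (2 ≤ k ∧ j + 1 = 1) := fun ⟨hk2, hj1'⟩ => hj0 ⟨hk2, by omega⟩
          have hstv' : stv k (j+1) (t+1) =
              ![0, (2:ℝ)^(((j+1:ℕ):ℤ)+1-2^k), (2:ℝ)^(-((t+1:ℕ):ℤ)), 0, 1] := by
            rw [stv, if_neg (by omega), if_neg hnot']
          rw [hse, hstv, hstv']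
          funext i; fin_cases i
          · show max 0 (-4*(0:ℝ) + 2*a - 1) = 0
            rw [max_eq_left (by linarith)]
          · show max 0 (-4*(0:ℝ) + 2*a + 2*0 - (1/2)*1 + 1/2)
                = (2:ℝ)^(((j+1:ℕ):ℤ)+1-2^k)
            rw [max_eq_right (by linarith),
              show (((j+1:ℕ)):ℤ) + 1 - 2^k = ((j:ℤ)+1-2^k) + 1 by push_cast; ring,
              zpow_add₀ (two_ne_zero : (2:ℝ) ≠ 0), zpow_one, ← ha]
            ring
          · show max 0 ((1/2)*(2:ℝ)^(-(t:ℤ)) - 1 + 1) = (2:ℝ)^(-((t+1:ℕ):ℤ))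
            rw [max_eq_right (by linarith), ← h2succ]; ring
          · show max 0 (a + (2:ℝ)^(-(t:ℤ)) - 2) = 0
            rw [max_eq_left (by linarith)]
          · norm_num

/-- Lemma (clocking mechanism): for all `t ∈ ℕ₀`, the first component of `h[t]` equals 1
if `t + 2 = 2^k` for some integer `k ≥ 2`, and 0 otherwise; moreover `‖h[t]‖∞ ≤ 2`. -/
theorem stmt7 (t : ℕ) :
    ((∃ k : ℕ, 2 ≤ k ∧ t + 2 = 2 ^ k) → clockSeq t 0 = 1) ∧
    ((¬ ∃ k : ℕ, 2 ≤ k ∧ t + 2 = 2 ^ k) → clockSeq t 0 = 0) ∧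
    ‖clockSeq t‖ ≤ 2 := by
  obtain ⟨k, j, hk, hj, ht, hcl⟩ := clockSeq_closed_form t
  have h2t : (2:ℝ) ^ (-(t:ℤ)) ≤ 1 := zpow_le_one' (by omega)
  have h2tpos : (0:ℝ) < 2 ^ (-(t:ℤ)) := by positivity
  refine ⟨?_, ?_, ?_⟩
  · rintro ⟨m, hm, hpow⟩
    have hmk : m = k ∧ j = 0 := by
      have hkm : k ≤ m := by
        by_contra hc
        push_neg at hc
        have : 2 ^ m < 2 ^ k := Nat.pow_lt_pow_right (by norm_num) hc
        omega
      have hmk' : m ≤ k := by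
        by_contra hc
        push_neg at hc
        have h1 : 2 ^ (k+1) ≤ 2 ^ m := Nat.pow_le_pow_right (by norm_num) hc
        have h2 : 2 ^ (k+1) = 2 * 2 ^ k := by ring
        omega
      have hm : m = k := le_antisymm hmk' hkm
      subst hm
      exact ⟨rfl, by omega⟩
    obtain ⟨hmk, hj0⟩ := hmk
    rw [hcl, stv, if_pos ⟨by omega, hj0⟩]; rfl
  · intro hno
    have hcase : ¬ (2 ≤ k ∧ j = 0) := by
      rintro ⟨hk2, hj0⟩
      exact hno ⟨k, hk2, by omega⟩
    rw [hcl, stv, if_neg hcase]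
    by_cases hj1 : 2 ≤ k ∧ j = 1
    · rw [if_pos hj1]; rfl
    · rw [if_neg hj1]; rfl
  · have hjk : (j:ℤ) + 1 ≤ 2 ^ k := by exact_mod_cast Nat.succ_le_of_lt hj
    have hale : (2:ℝ)^((j:ℤ)+1-2^k) ≤ 1 := zpow_le_one' (by omega)
    have hapos : (0:ℝ) < 2^((j:ℤ)+1-2^k) := by positivity
    have h2t' : ((2:ℝ)^t)⁻¹ ≤ 1 := by
      rw [inv_le_one_iff₀]; right; exact one_le_pow₀ one_le_two
    have h2tpos' : (0:ℝ) < ((2:ℝ)^t)⁻¹ := by positivity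
    have hbound : ∀ i, |clockSeq t i| ≤ 2 := by
      intro i
      rw [hcl, stv]
      split_ifs with h1 h2 <;> fin_cases i <;>
        · refine abs_le.mpr ⟨?_, ?_⟩ <;> (norm_num; try linarith)
    rw [pi_norm_le_iff_of_nonneg (by norm_num : (0:ℝ) ≤ 2)]
    intro i; simpa using hbound i
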